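/- For the discrete-time quantum walk with coin U^S(α,β,γ) and initial state (1/√2)|0⟩(|↓⟩ + i|↑⟩), if α + γ ≡ 0 (mod π) then P_R − P_L = 0 after every number of steps t. -/
import Mathlib


open Complex

/-- One step of the discrete-time quantum walk `W = S (I ⊗ U)` on amplitudes
`ψ : ℤ → Fin 2 → ℂ`, where `ψ x 0` is the `|↑⟩` (right-moving) amplitude at site `x`
and `ψ x 1` the `|↓⟩` (left-moving) one: first the coin `U` acts, then the shift. -/
noncomputable def qwStep (U : Matrix (Fin 2) (Fin 2) ℂ) (ψ : ℤ → Fin 2 → ℂ) :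
    ℤ → Fin 2 → ℂ :=
  fun x c => if c = 0 then U.mulVec (ψ (x - 1)) 0 else U.mulVec (ψ (x + 1)) 1

/-- The probability of finding the walker at site `x`. -/
noncomputable def prob (ψ : ℤ → Fin 2 → ℂ) (x : ℤ) : ℝ := ∑ c : Fin 2, ‖ψ x c‖ ^ 2

/-- Total probability strictly to the right of the origin. -/
noncomputable def PR (ψ : ℤ → Fin 2 → ℂ) : ℝ := ∑' x : {x : ℤ // 0 < x}, prob ψ x

/-- Total probability strictly to the left of the origin. -/
noncomputable def PL (ψ : ℤ → Fin 2 → ℂ) : ℝ := ∑' x : {x : ℤ // x < 0}, prob ψ x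

/-- The initial state `(1/√2)|0⟩(|↓⟩ + i|↑⟩)`. -/
noncomputable def ψinit : ℤ → Fin 2 → ℂ :=
  fun x => if x = 0 then ![I / Real.sqrt 2, 1 / Real.sqrt 2] else 0

/-- The SU(2) coin `U^S(α,β,γ)`. -/
noncomputable def USU (α β γ : ℝ) : Matrix (Fin 2) (Fin 2) ℂ :=
  !![exp ((α : ℂ) * I) * (Real.cos β : ℂ), -exp (-(γ : ℂ) * I) * (Real.sin β : ℂ);
     exp ((γ : ℂ) * I) * (Real.sin β : ℂ), exp (-(α : ℂ) * I) * (Real.cos β : ℂ)]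

/-- The antisymmetry map `(Fmap α ψ) x c = ±e^{2iαx} ψ(-x, 1-c)`, which reflects the
walk about the origin and commutes with the walk when `α + γ ≡ 0 (mod π)`. -/
noncomputable def Fmap (α : ℝ) (ψ : ℤ → Fin 2 → ℂ) : ℤ → Fin 2 → ℂ :=
  fun x c => if c = 0 then exp ((2 * α * (x : ℝ) : ℝ) * I) * ψ (-x) 1
             else -(exp ((2 * α * (x : ℝ) : ℝ) * I) * ψ (-x) 0)

lemma Fmap_comm (α β γ : ℝ) (h : ∃ k : ℤ, α + γ = k * Real.pi) (ψ : ℤ → Fin 2 → ℂ) :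
    Fmap α (qwStep (USU α β γ) ψ) = qwStep (USU α β γ) (Fmap α ψ) := by
  obtain ⟨k, hk⟩ := h
  have e1 : exp (((2 * α + 2 * γ : ℝ) : ℂ) * I) = 1 := by
    have h2 : (2 * α + 2 * γ : ℝ) = k * (2 * Real.pi) := by linarith
    rw [h2]; push_cast; rw [mul_assoc]
    exact Complex.exp_int_mul_two_pi_mul_I k
  funext x c
  fin_cases c <;>
    simp [Fmap, qwStep, USU, Matrix.mulVec, dotProduct, Fin.sum_univ_two]
  · rw [show (1 - x : ℤ) = -x + 1 by ring]
    have ha : exp (2*(α:ℂ)*x*I) * exp ((γ:ℂ)*I)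
        = exp (-((γ:ℂ)*I)) * exp (2*(α:ℂ)*((x:ℂ)-1)*I) := by
      rw [← exp_add, ← exp_add,
        show 2*(α:ℂ)*x*I + (γ:ℂ)*I
          = (-((γ:ℂ)*I) + 2*(α:ℂ)*((x:ℂ)-1)*I) + ((2*α + 2*γ : ℝ) : ℂ)*I by push_cast; ring,
        exp_add, e1, mul_one]
    have hb : exp (2*(α:ℂ)*x*I) * exp (-((α:ℂ)*I))
        = exp ((α:ℂ)*I) * exp (2*(α:ℂ)*((x:ℂ)-1)*I) := by
      rw [← exp_add, ← exp_add]; congr 1; ring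
    linear_combination (Complex.sin β * ψ (-x+1) 0) * ha + (Complex.cos β * ψ (-x+1) 1) * hb
  · rw [show (-1 + -x : ℤ) = -x - 1 by ring]
    have ha : exp (2*(α:ℂ)*x*I) * exp ((α:ℂ)*I)
        = exp (-((α:ℂ)*I)) * exp (2*(α:ℂ)*((x:ℂ)+1)*I) := by
      rw [← exp_add, ← exp_add]; congr 1; ring
    have hb : exp (2*(α:ℂ)*x*I) * exp (-((γ:ℂ)*I)) * exp (((2*α + 2*γ : ℝ) : ℂ)*I)
        = exp ((γ:ℂ)*I) * exp (2*(α:ℂ)*((x:ℂ)+1)*I) := by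
      rw [← exp_add, ← exp_add, ← exp_add]; congr 1; push_cast; ring
    rw [e1, mul_one] at hb
    linear_combination (-(Complex.cos β) * ψ (-x-1) 0) * ha + (Complex.sin β * ψ (-x-1) 1) * hb

lemma qwStep_smul (U : Matrix (Fin 2) (Fin 2) ℂ) (a : ℂ) (ψ : ℤ → Fin 2 → ℂ) :
    qwStep U (fun x c => a * ψ x c) = fun x c => a * qwStep U ψ x c := by
  funext x c
  by_cases hc : c = 0 <;>
    simp [qwStep, hc, Matrix.mulVec, dotProduct, Fin.sum_univ_two] <;> ring

lemma Fmap_psinit (α : ℝ) : Fmap α ψinit = fun x c => -I * ψinit x c := by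
  funext x c
  rcases eq_or_ne x 0 with rfl | hx
  · fin_cases c <;> simp [Fmap, ψinit] <;> ring_nf <;> simp [Complex.I_sq]
  · fin_cases c <;> simp [Fmap, ψinit, hx, neg_eq_zero]

lemma prob_Fmap (α : ℝ) (ψ : ℤ → Fin 2 → ℂ) (x : ℤ) :
    prob (Fmap α ψ) x = prob ψ (-x) := by
  simp only [prob, Fmap, Fin.sum_univ_two, if_pos, reduceIte, norm_neg, norm_mul,
    Complex.norm_exp_ofReal_mul_I, one_mul, one_ne_zero, if_false,
    Fin.one_eq_zero_iff, OfNat.ofNat_ne_one, ite_false]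
  ring

lemma prob_negI (ψ : ℤ → Fin 2 → ℂ) (x : ℤ) :
    prob (fun x c => -I * ψ x c) x = prob ψ x := by
  simp [prob, Fin.sum_univ_two, norm_mul]

def negEquiv : {x : ℤ // 0 < x} ≃ {x : ℤ // x < 0} :=
  ⟨fun a => ⟨-a.1, by omega⟩, fun a => ⟨-a.1, by omega⟩,
   fun a => by simp, fun a => by simp⟩

lemma PR_Fmap (α : ℝ) (ψ : ℤ → Fin 2 → ℂ) : PR (Fmap α ψ) = PL ψ := by
  unfold PR PL
  rw [← Equiv.tsum_eq negEquiv (fun x : {x : ℤ // x < 0} => prob ψ x)]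
  exact tsum_congr fun a => by simp [prob_Fmap, negEquiv]

lemma PR_negI (ψ : ℤ → Fin 2 → ℂ) : PR (fun x c => -I * ψ x c) = PR ψ :=
  tsum_congr fun a => prob_negI ψ a

lemma Fmap_iterate (α β γ : ℝ) (h : ∃ k : ℤ, α + γ = k * Real.pi) (t : ℕ)
    (ψ : ℤ → Fin 2 → ℂ) :
    Fmap α ((qwStep (USU α β γ))^[t] ψ) = (qwStep (USU α β γ))^[t] (Fmap α ψ) := by
  induction t generalizing ψ with
  | zero => rfl
  | succ n ih =>
    rw [Function.iterate_succ_apply, Function.iterate_succ_apply, ih,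
      Fmap_comm α β γ h]

lemma iterate_negI (U : Matrix (Fin 2) (Fin 2) ℂ) (t : ℕ) (ψ : ℤ → Fin 2 → ℂ) :
    (qwStep U)^[t] (fun x c => -I * ψ x c) = fun x c => -I * (qwStep U)^[t] ψ x c := by
  induction t generalizing ψ with
  | zero => rfl
  | succ n ih =>
    rw [Function.iterate_succ_apply, Function.iterate_succ_apply, qwStep_smul, ih]

theorem PR_sub_PL_zero_of_sin_zero (α β γ : ℝ) (h : ∃ k : ℤ, α + γ = k * Real.pi)
    (t : ℕ) :
    PR ((qwStep (USU α β γ))^[t] ψinit) - PL ((qwStep (USU α β γ))^[t] ψinit) = 0 := by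
  have key : PL ((qwStep (USU α β γ))^[t] ψinit) = PR ((qwStep (USU α β γ))^[t] ψinit) := by
    rw [← PR_Fmap α, Fmap_iterate α β γ h, Fmap_psinit, iterate_negI, PR_negI]
  rw [key, sub_self]
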